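/- The number of 3 2 1-avoiding permutations of {1,...,ℓ} equals the Catalan number C_ℓ = (1/(ℓ+1))·binom(2ℓ, ℓ). -/

import Mathlib

/-- A permutation `σ` of `{1,…,ℓ}` (modeled as `Fin ℓ`) is `3 2 1`-avoiding if there do not
exist `a < b < c` with `σ c < σ b < σ a`. -/
def Avoids321 {ℓ : ℕ} (σ : Equiv.Perm (Fin ℓ)) : Prop :=
  ¬ ∃ a b c : Fin ℓ, a < b ∧ b < c ∧ σ c < σ b ∧ σ b < σ a


open Finset

/-- Monotone functions `Fin n → ℕ` weakly above the diagonal and bounded by `n`. -/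
def SubDiag (n : ℕ) : Type :=
  {M : Fin n → ℕ // Monotone M ∧ ∀ i : Fin n, (i : ℕ) ≤ M i ∧ M i < n}

instance (n : ℕ) : Finite (SubDiag n) := by
  apply Finite.of_injective (β := Fin n → Fin n)
    (fun M => fun i => ⟨M.1 i, (M.2.2 i).2⟩)
  intro M N h
  apply Subtype.ext; funext i
  exact congrArg Fin.val (congrFun h i)

lemma subdiag_zero : Nat.card (SubDiag 0) = 1 := by
  have : Unique (SubDiag 0) := {
    default := ⟨fun i => i.elim0, by refine ⟨?_, ?_⟩ <;> intro i <;> exact i.elim0⟩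
    uniq := fun a => by
      apply Subtype.ext; funext i; exact i.elim0 }
  simp [Nat.card_unique]

/-- glue map for the first-return decomposition -/
def glue (n : ℕ) (p : Σ i : Fin (n + 1), SubDiag i × SubDiag (n - i)) : SubDiag (n + 1) :=
  ⟨fun j => if h : (j : ℕ) < (p.1 : ℕ) then p.2.1.1 ⟨j, h⟩ + 1
    else if h2 : (j : ℕ) = (p.1 : ℕ) then (p.1 : ℕ)
    else p.2.2.1 ⟨(j : ℕ) - p.1 - 1, by have := j.isLt; have := p.1.isLt; omega⟩ + p.1 + 1, by
  obtain ⟨i, A, B⟩ := p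
  have hA := A.2.1; have hA2 := A.2.2; have hB := B.2.1; have hB2 := B.2.2
  have hin := i.isLt
  constructor
  · intro a b hab
    replace hab : (a : ℕ) ≤ (b : ℕ) := hab
    dsimp only
    by_cases ha : (a : ℕ) < i
    · by_cases hb : (b : ℕ) < i
      · rw [dif_pos ha, dif_pos hb]
        have := hA (a := ⟨a, ha⟩) (b := ⟨b, hb⟩) hab
        omega
      · have h1 := (hA2 ⟨a, ha⟩).2
        by_cases hb2 : (b : ℕ) = i
        · rw [dif_pos ha, dif_neg hb, dif_pos hb2]; omega
        · rw [dif_pos ha, dif_neg hb, dif_neg hb2]; omega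
    · have hb : ¬ (b : ℕ) < i := by omega
      by_cases ha2 : (a : ℕ) = i
      · by_cases hb2 : (b : ℕ) = i
        · rw [dif_neg ha, dif_neg hb, dif_pos ha2, dif_pos hb2]
        · rw [dif_neg ha, dif_neg hb, dif_pos ha2, dif_neg hb2]; omega
      · have hb2 : ¬ (b : ℕ) = i := by omega
        rw [dif_neg ha, dif_neg hb, dif_neg ha2, dif_neg hb2]
        have := hB (a := ⟨(a : ℕ) - i - 1, by have := a.isLt; omega⟩)
          (b := ⟨(b : ℕ) - i - 1, by have := b.isLt; omega⟩)
          (show (a : ℕ) - i - 1 ≤ (b : ℕ) - i - 1 by omega)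
        omega
  · intro j
    dsimp only
    by_cases ha : (j : ℕ) < i
    · rw [dif_pos ha]
      have := hA2 ⟨j, ha⟩; simp only [Fin.val_mk] at this; omega
    · by_cases h2 : (j : ℕ) = i
      · rw [dif_neg ha, dif_pos h2]; omega
      · rw [dif_neg ha, dif_neg h2]
        have := hB2 ⟨(j : ℕ) - i - 1, by have := j.isLt; omega⟩
        simp only [Fin.val_mk] at this
        omega⟩

lemma glue_val_lt {n : ℕ} (i : Fin (n+1)) (A : SubDiag i) (B : SubDiag (n - i))
    (j : Fin (n+1)) (h : (j : ℕ) < (i : ℕ)) :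
    (glue n ⟨i, A, B⟩).1 j = A.1 ⟨j, h⟩ + 1 := by
  simp only [glue, dif_pos h]

lemma glue_val_eq {n : ℕ} (i : Fin (n+1)) (A : SubDiag i) (B : SubDiag (n - i))
    (j : Fin (n+1)) (h : (j : ℕ) = (i : ℕ)) :
    (glue n ⟨i, A, B⟩).1 j = (i : ℕ) := by
  simp only [glue, dif_neg (show ¬ (j:ℕ) < i by omega), dif_pos h]

lemma glue_val_gt {n : ℕ} (i : Fin (n+1)) (A : SubDiag i) (B : SubDiag (n - i))
    (j : Fin (n+1)) (h : (i : ℕ) < (j : ℕ)) :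
    (glue n ⟨i, A, B⟩).1 j
      = B.1 ⟨(j : ℕ) - i - 1, by have := j.isLt; have := i.isLt; omega⟩ + i + 1 := by
  simp only [glue, dif_neg (show ¬ (j:ℕ) < i by omega), dif_neg (show ¬ (j:ℕ) = i by omega)]

lemma glue_bijective (n : ℕ) : Function.Bijective (glue n) := by
  constructor
  · rintro ⟨i, A, B⟩ ⟨i', A', B'⟩ h
    have hfun : ∀ j, (glue n ⟨i, A, B⟩).1 j = (glue n ⟨i', A', B'⟩).1 j := by
      intro j; rw [h]
    have hii : (i : ℕ) = (i' : ℕ) := by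
      by_contra hne
      rcases Nat.lt_or_ge (i : ℕ) (i' : ℕ) with hlt | hge
      · have h1 := hfun i
        rw [glue_val_eq i A B i rfl, glue_val_lt i' A' B' i hlt] at h1
        have := (A'.2.2 ⟨i, hlt⟩).1
        simp only [Fin.val_mk] at this; omega
      · have hlt : (i' : ℕ) < i := by omega
        have h1 := hfun i'
        rw [glue_val_eq i' A' B' i' rfl, glue_val_lt i A B i' hlt] at h1
        have := (A.2.2 ⟨i', hlt⟩).1
        simp only [Fin.val_mk] at this; omega
    have hi : i = i' := Fin.ext hii
    subst hi
    have hA : A = A' := by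
      apply Subtype.ext; funext x
      have hxi : ((⟨(x : ℕ), by have := x.isLt; have := i.isLt; omega⟩ : Fin (n+1)) : ℕ) < (i : ℕ) := x.isLt
      have h1 := hfun ⟨(x : ℕ), by have := x.isLt; have := i.isLt; omega⟩
      rw [glue_val_lt i A B _ hxi, glue_val_lt i A' B' _ hxi] at h1
      have hx : (⟨((⟨(x : ℕ), by have := x.isLt; have := i.isLt; omega⟩ : Fin (n+1)) : ℕ), hxi⟩ : Fin i) = x :=
        Fin.ext rfl
      rw [hx] at h1
      omega
    have hB : B = B' := by
      apply Subtype.ext; funext x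
      have hxlt : (i : ℕ) + 1 + (x : ℕ) < n + 1 := by
        have := x.isLt; have := i.isLt; omega
      have hgt : (i : ℕ) < ((⟨(i : ℕ) + 1 + (x : ℕ), hxlt⟩ : Fin (n+1)) : ℕ) := by
        simp only [Fin.val_mk]; omega
      have h1 := hfun ⟨(i : ℕ) + 1 + (x : ℕ), hxlt⟩
      rw [glue_val_gt i A B _ hgt, glue_val_gt i A' B' _ hgt] at h1
      rw [show (⟨((⟨(i : ℕ) + 1 + (x : ℕ), hxlt⟩ : Fin (n+1)) : ℕ) - i - 1,
        by have := x.isLt; simp only [Fin.val_mk]; omega⟩ : Fin (n - i)) = x from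
        Fin.ext (by simp only [Fin.val_mk]; omega)] at h1
      omega
    rw [hA, hB]
  · rintro ⟨M, hM, hD⟩
    classical
    set N : ℕ → ℕ := fun j => if h : j < n + 1 then M ⟨j, h⟩ else j with hN
    have hNM : ∀ j : Fin (n+1), N j = M j := fun j => dif_pos j.isLt
    have hNval : ∀ j (h : j < n + 1), N j = M ⟨j, h⟩ := fun j h => dif_pos h
    have hNmono : ∀ a b : ℕ, a ≤ b → b < n + 1 → N a ≤ N b := by
      intro a b hab hb
      rw [hNval a (by omega), hNval b hb]
      exact hM (a := ⟨a, by omega⟩) (b := ⟨b, hb⟩) hab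
    have hNdiag : ∀ a : ℕ, a < n + 1 → a ≤ N a ∧ N a < n + 1 := by
      intro a ha
      rw [hNval a ha]
      exact hD ⟨a, ha⟩
    have hex : ∃ j : ℕ, j < n + 1 ∧ N j = j := by
      refine ⟨n, Nat.lt_succ_self n, ?_⟩
      have := hNdiag n (Nat.lt_succ_self n)
      omega
    obtain ⟨k, ⟨hk, hMk⟩, hmin⟩ :
        ∃ k, (k < n + 1 ∧ N k = k) ∧ ∀ j < k, ¬ (j < n + 1 ∧ N j = j) :=
      ⟨Nat.find hex, Nat.find_spec hex, fun j hj => Nat.find_min hex hj⟩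
    have hstrict : ∀ j, j < k → j < N j := by
      intro j hj
      have h1 := hmin j hj
      have h2 := hNdiag j (by omega)
      omega
    refine ⟨⟨⟨k, hk⟩, ⟨fun x => N x - 1, ?_, ?_⟩, ⟨fun x => N (k + 1 + x) - (k + 1), ?_, ?_⟩⟩, ?_⟩
    · intro a b hab
      replace hab : (a : ℕ) ≤ (b : ℕ) := hab
      have hbk : (b : ℕ) < k := b.isLt
      have h1 := hNmono a b hab (by omega)
      have h2 := hstrict a (by omega)
      dsimp only
      omega
    · intro x
      have hxk : (x : ℕ) < k := x.isLt
      have h1 := hstrict x hxk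
      have h2 := hNmono x k (by omega) hk
      exact ⟨show (x : ℕ) ≤ N (x : ℕ) - 1 by omega,
        show N (x : ℕ) - 1 < k by omega⟩
    · intro a b hab
      replace hab : (a : ℕ) ≤ (b : ℕ) := hab
      have hbk : (b : ℕ) < n - k := b.isLt
      have h1 := hNmono (k + 1 + a) (k + 1 + b) (by omega) (by omega)
      dsimp only
      omega
    · intro x
      have hxk : (x : ℕ) < n - k := x.isLt
      have h1 := hNdiag (k + 1 + x) (by omega)
      exact ⟨show (x : ℕ) ≤ N (k + 1 + (x : ℕ)) - (k + 1) by omega,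
        show N (k + 1 + (x : ℕ)) - (k + 1) < n - k by omega⟩
    · apply Subtype.ext; funext j
      have hNj := hNM j
      by_cases h1 : (j : ℕ) < k
      · refine Eq.trans (glue_val_lt ⟨k, hk⟩ _ _ j h1) ?_
        have h2 := hstrict j h1
        show N (j : ℕ) - 1 + 1 = M j
        omega
      · by_cases h2 : (j : ℕ) = k
        · refine Eq.trans (glue_val_eq ⟨k, hk⟩ _ _ j h2) ?_
          show k = M j
          have h3 : N (j : ℕ) = (j : ℕ) := by rw [h2]; exact hMk
          omega
        · refine Eq.trans (glue_val_gt ⟨k, hk⟩ _ _ j (by show k < (j : ℕ); omega)) ?_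
          have hj : k + 1 + ((j : ℕ) - k - 1) = (j : ℕ) := by omega
          show N (k + 1 + ((j : ℕ) - k - 1)) - (k + 1) + k + 1 = M j
          rw [hj]
          have h4 := hNdiag j j.isLt
          omega

lemma nat_card_sigma {m : ℕ} (α : Fin m → Type*) [∀ i, Finite (α i)] :
    Nat.card (Sigma α) = ∑ i, Nat.card (α i) := by
  classical
  letI : ∀ i, Fintype (α i) := fun i => Fintype.ofFinite _
  rw [Nat.card_eq_fintype_card, Fintype.card_sigma]
  simp [Nat.card_eq_fintype_card]

lemma subdiag_card (n : ℕ) : Nat.card (SubDiag n) = catalan n := by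
  induction n using Nat.strong_induction_on with
  | _ n ih =>
    match n with
    | 0 => simpa using subdiag_zero
    | n + 1 =>
      rw [← Nat.card_eq_of_bijective _ (glue_bijective n), nat_card_sigma, catalan_succ]
      congr 1
      funext i
      rw [Nat.card_prod, ih i (by omega : (i:ℕ) < n+1), ih (n - i) (by omega)]

namespace StepA

variable {n : ℕ}

def fpred (i : Fin n) : Fin n := ⟨(i : ℕ) - 1, by have := i.isLt; omega⟩

lemma fpred_le (i : Fin n) : fpred i ≤ i := by
  simp [fpred, Fin.le_def]

lemma le_fpred {a i : Fin n} (h : a < i) : a ≤ fpred i := by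
  have : (a : ℕ) < i := h
  simp [fpred, Fin.le_def]; omega

def IsJump (M : SubDiag n) (i : Fin n) : Prop := (i : ℕ) = 0 ∨ M.1 (fpred i) < M.1 i

instance (M : SubDiag n) : DecidablePred (IsJump M) := fun i => by
  unfold IsJump; infer_instance

def Mf (M : SubDiag n) : Fin n → Fin n := fun i => ⟨M.1 i, (M.2.2 i).2⟩

def JJ (M : SubDiag n) : Finset (Fin n) := univ.filter (IsJump M)
def KK (M : SubDiag n) : Finset (Fin n) := univ.filter (fun i => ¬ IsJump M i)
def VV (M : SubDiag n) : Finset (Fin n) := (univ.image (Mf M))ᶜ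

lemma mem_KK {M : SubDiag n} {i : Fin n} : i ∈ KK M ↔ ¬ IsJump M i := by simp [KK]
lemma mem_JJ {M : SubDiag n} {i : Fin n} : i ∈ JJ M ↔ IsJump M i := by simp [JJ]
lemma mem_VV {M : SubDiag n} {w : Fin n} : w ∈ VV M ↔ ∀ j : Fin n, Mf M j ≠ w := by
  simp [VV]

/-- every value of `M` is attained at a jump position below -/
lemma lastJump (M : SubDiag n) (j : Fin n) :
    ∃ i : Fin n, IsJump M i ∧ i ≤ j ∧ M.1 i = M.1 j := by
  suffices h : ∀ m, ∀ j : Fin n, (j : ℕ) ≤ m → ∃ i : Fin n, IsJump M i ∧ i ≤ j ∧ M.1 i = M.1 j from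
    h (j : ℕ) j le_rfl
  intro m
  induction m with
  | zero => exact fun j hj => ⟨j, Or.inl (by omega), le_rfl, rfl⟩
  | succ m ih =>
    intro j hj
    by_cases h : IsJump M j
    · exact ⟨j, h, le_rfl, rfl⟩
    · unfold IsJump at h
      push_neg at h
      obtain ⟨h0, hlt⟩ := h
      have heq : M.1 (fpred j) = M.1 j := le_antisymm (M.2.1 (fpred_le j)) hlt
      have hval : ((fpred j : Fin n) : ℕ) ≤ m := by simp [fpred]; omega
      obtain ⟨i, hi, hle, he⟩ := ih (fpred j) hval
      exact ⟨i, hi, le_trans hle (fpred_le j), he.trans heq⟩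

/-- `M` is strictly larger at a jump than anywhere before -/
lemma lt_of_jump {M : SubDiag n} {i i' : Fin n} (h : IsJump M i') (hlt : i < i') :
    M.1 i < M.1 i' := by
  rcases h with h0 | h
  · have : (i : ℕ) < (i' : ℕ) := hlt
    omega
  · exact lt_of_le_of_lt (M.2.1 (le_fpred hlt)) h

lemma image_eq_image_JJ (M : SubDiag n) : univ.image (Mf M) = (JJ M).image (Mf M) := by
  apply Finset.Subset.antisymm
  · intro w hw
    obtain ⟨j, _, rfl⟩ := Finset.mem_image.1 hw
    obtain ⟨i, hi, hle, he⟩ := lastJump M j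
    exact Finset.mem_image.2 ⟨i, mem_JJ.2 hi, by apply Fin.ext; simpa [Mf] using he⟩
  · exact Finset.image_subset_image (Finset.subset_univ _)

lemma injOn_JJ (M : SubDiag n) : Set.InjOn (Mf M) (JJ M) := by
  intro a ha b hb hab
  by_contra hne
  have hab' : M.1 a = M.1 b := by
    have := congrArg Fin.val hab; simpa [Mf] using this
  rcases lt_or_gt_of_ne (hne : a ≠ b) with h | h
  · exact absurd hab' (ne_of_lt (lt_of_jump (mem_JJ.1 hb) h))
  · exact absurd hab'.symm (ne_of_lt (lt_of_jump (mem_JJ.1 ha) h))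

lemma card_VV (M : SubDiag n) : (VV M).card = (KK M).card := by
  have h1 : (univ.image (Mf M)).card = (JJ M).card := by
    rw [image_eq_image_JJ M, Finset.card_image_of_injOn (injOn_JJ M)]
  have h2 : (JJ M).card + (KK M).card = n := by
    have := Finset.card_filter_add_card_filter_not
      (s := (univ : Finset (Fin n))) (p := IsJump M)
    simpa [JJ, KK] using this
  have h3 : (VV M).card = n - (univ.image (Mf M)).card := by
    rw [VV, Finset.card_compl]; simp
  have h4 : (univ.image (Mf M)).card ≤ n := by
    simpa using Finset.card_le_univ (univ.image (Mf M))
  omega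

noncomputable def eV (M : SubDiag n) : Fin (KK M).card ↪o Fin n :=
  (VV M).orderEmbOfFin (card_VV M)

noncomputable def eK (M : SubDiag n) : Fin (KK M).card ↪o Fin n :=
  (KK M).orderEmbOfFin rfl

noncomputable def isoK (M : SubDiag n) : Fin (KK M).card ≃o (KK M) :=
  (KK M).orderIsoOfFin rfl

lemma eK_isoK (M : SubDiag n) (x : Fin (KK M).card) : eK M x = (isoK M x : Fin n) :=
  ((KK M).coe_orderIsoOfFin_apply rfl x).symm

noncomputable def cand (M : SubDiag n) : Fin n → Fin n := fun i =>
  if h : IsJump M i then Mf M i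
  else eV M ((isoK M).symm ⟨i, mem_KK.2 h⟩)

lemma cand_jump {M : SubDiag n} {i : Fin n} (h : IsJump M i) : cand M i = Mf M i :=
  dif_pos h

/-- The key counting lemma: at a non-jump the candidate value is `< M i`. -/
lemma cand_lt {M : SubDiag n} {i : Fin n} (h : ¬ IsJump M i) :
    ((cand M i : Fin n) : ℕ) < M.1 i := by
  rw [show cand M i = eV M ((isoK M).symm ⟨i, mem_KK.2 h⟩) from dif_neg h]
  set x := (isoK M).symm ⟨i, mem_KK.2 h⟩ with hx
  have heKx : eK M x = i := by
    rw [eK_isoK M x, hx, OrderIso.apply_symm_apply]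
  by_contra hcon
  push_neg at hcon
  -- `hcon : M.1 i ≤ eV M x`
  set C : Finset (Fin n) := Iic (Mf M i) with hC
  have hcardC : C.card = M.1 i + 1 := by rw [hC, Fin.card_Iic]; rfl
  have hsplit := Finset.card_filter_add_card_filter_not
    (s := C) (p := fun w => w ∈ VV M)
  -- bound 1 : the VV part has at most `x` elements
  have hb1 : (C.filter (fun w => w ∈ VV M)).card ≤ (x : ℕ) := by
    have hsub : C.filter (fun w => w ∈ VV M) ⊆
        (univ.filter (fun y : Fin (KK M).card => (y : ℕ) < (x : ℕ))).image (eV M) := by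
      intro w hw
      rw [Finset.mem_filter] at hw
      obtain ⟨hwC, hwV⟩ := hw
      have hwle : (w : ℕ) ≤ M.1 i := by
        have := Finset.mem_Iic.1 hwC; exact this
      have : w ∈ Set.range (eV M) := by
        rw [eV, Finset.range_orderEmbOfFin]; exact hwV
      obtain ⟨y, rfl⟩ := this
      refine Finset.mem_image.2 ⟨y, Finset.mem_filter.2 ⟨Finset.mem_univ _, ?_⟩, rfl⟩
      by_contra hyx
      push_neg at hyx
      have h1 : (eV M x : ℕ) ≤ (eV M y : ℕ) := (eV M).monotone hyx
      have h2 : (eV M y : ℕ) = M.1 i := le_antisymm hwle (le_trans hcon h1)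
      have : Mf M i ∈ VV M := by
        rw [show Mf M i = eV M y from Fin.ext h2.symm]
        exact Finset.orderEmbOfFin_mem _ _ _
      rw [mem_VV] at this
      exact this i rfl
    calc (C.filter (fun w => w ∈ VV M)).card
        ≤ _ := Finset.card_le_card hsub
      _ ≤ (univ.filter (fun y : Fin (KK M).card => (y : ℕ) < (x : ℕ))).card :=
          Finset.card_image_le
      _ = (x : ℕ) := by
          rw [show univ.filter (fun y : Fin (KK M).card => (y : ℕ) < (x : ℕ)) = Iio x by
            ext y
            simp only [Finset.mem_filter, Finset.mem_univ, true_and, Finset.mem_Iio]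
            exact Iff.rfl]
          rw [Fin.card_Iio]
  -- bound 2 : the non-VV part is contained in the image of jumps `≤ i`
  have hb2 : (C.filter (fun w => w ∉ VV M)).card ≤ ((JJ M).filter (· ≤ i)).card := by
    have hsub : C.filter (fun w => w ∉ VV M) ⊆ ((JJ M).filter (· ≤ i)).image (Mf M) := by
      intro w hw
      rw [Finset.mem_filter] at hw
      obtain ⟨hwC, hwV⟩ := hw
      have hwle : (w : ℕ) ≤ M.1 i := by have := Finset.mem_Iic.1 hwC; exact this
      rw [mem_VV] at hwV
      push_neg at hwV
      obtain ⟨j0, hj0⟩ := hwV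
      obtain ⟨i0, hi0, hle0, he0⟩ := lastJump M j0
      have hw0 : Mf M i0 = w := by
        rw [← hj0]; exact Fin.ext (by simpa [Mf] using he0)
      have hi0i : i0 ≤ i := by
        by_contra hgt
        push_neg at hgt
        have := lt_of_jump hi0 hgt
        have hwv : (w : ℕ) = M.1 i0 := by rw [← hw0]; rfl
        omega
      exact Finset.mem_image.2 ⟨i0, Finset.mem_filter.2 ⟨mem_JJ.2 hi0, hi0i⟩, hw0⟩
    exact le_trans (Finset.card_le_card hsub) Finset.card_image_le
  -- bound 3 : there are at least `x + 1` non-jumps `≤ i`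
  have hb3 : (x : ℕ) + 1 ≤ ((KK M).filter (· ≤ i)).card := by
    have hsub : (Iic x).image (eK M) ⊆ (KK M).filter (· ≤ i) := by
      intro w hw
      obtain ⟨y, hy, rfl⟩ := Finset.mem_image.1 hw
      refine Finset.mem_filter.2 ⟨Finset.orderEmbOfFin_mem _ _ _, ?_⟩
      rw [← heKx]
      exact (eK M).monotone (Finset.mem_Iic.1 hy)
    have := Finset.card_le_card hsub
    rwa [Finset.card_image_of_injective _ (eK M).injective, Fin.card_Iic] at this
  -- bound 4 : jumps and non-jumps `≤ i` partition `Iic i`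
  have hb4 : ((JJ M).filter (· ≤ i)).card + ((KK M).filter (· ≤ i)).card = (i : ℕ) + 1 := by
    have h1 : (JJ M).filter (· ≤ i) = (Iic i).filter (IsJump M) := by
      ext w; simp [JJ, Finset.mem_filter, and_comm]
    have h2 : (KK M).filter (· ≤ i) = (Iic i).filter (fun w => ¬ IsJump M w) := by
      ext w; simp [KK, Finset.mem_filter, and_comm]
    rw [h1, h2, Finset.card_filter_add_card_filter_not, Fin.card_Iic]
  have hdiag := (M.2.2 i).1
  omega

lemma cand_nonjump {M : SubDiag n} {i : Fin n} (h : ¬ IsJump M i) :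
    cand M i = eV M ((isoK M).symm ⟨i, mem_KK.2 h⟩) := dif_neg h

lemma cand_mem_VV {M : SubDiag n} {i : Fin n} (h : ¬ IsJump M i) : cand M i ∈ VV M := by
  rw [cand_nonjump h]; exact Finset.orderEmbOfFin_mem _ _ _

lemma cand_le {M : SubDiag n} (i : Fin n) : ((cand M i : Fin n) : ℕ) ≤ M.1 i := by
  by_cases h : IsJump M i
  · rw [cand_jump h]; rfl
  · exact le_of_lt (cand_lt h)

lemma cand_strict_on_K {M : SubDiag n} {i i' : Fin n} (hi : ¬ IsJump M i)
    (hi' : ¬ IsJump M i') (hlt : i < i') : cand M i < cand M i' := by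
  rw [cand_nonjump hi, cand_nonjump hi']
  apply (eV M).strictMono
  apply (isoK M).symm.strictMono
  exact hlt

lemma cand_injective (M : SubDiag n) : Function.Injective (cand M) := by
  intro a b hab
  by_cases ha : IsJump M a <;> by_cases hb : IsJump M b
  · rw [cand_jump ha, cand_jump hb] at hab
    exact injOn_JJ M (mem_JJ.2 ha) (mem_JJ.2 hb) hab
  · exfalso
    have h1 : cand M b ∈ VV M := cand_mem_VV hb
    rw [← hab, cand_jump ha, mem_VV] at h1
    exact h1 a rfl
  · exfalso
    have h1 : cand M a ∈ VV M := cand_mem_VV ha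
    rw [hab, cand_jump hb, mem_VV] at h1
    exact h1 b rfl
  · rcases lt_trichotomy a b with h | h | h
    · exact absurd hab (ne_of_lt (cand_strict_on_K ha hb h))
    · exact h
    · exact absurd hab.symm (ne_of_lt (cand_strict_on_K hb ha h))

noncomputable def candPerm (M : SubDiag n) : Equiv.Perm (Fin n) :=
  Equiv.ofBijective (cand M) (Finite.injective_iff_bijective.1 (cand_injective M))

lemma candPerm_apply (M : SubDiag n) (i : Fin n) : candPerm M i = cand M i := rfl

lemma cand_runmax (M : SubDiag n) (i : Fin n) :
    (Iic i).sup (fun j => ((cand M j : Fin n) : ℕ)) = M.1 i := by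
  apply le_antisymm
  · apply Finset.sup_le
    intro j hj
    exact le_trans (cand_le j) (M.2.1 (Finset.mem_Iic.1 hj))
  · obtain ⟨i0, hi0, hle, he⟩ := lastJump M i
    have h1 : ((cand M i0 : Fin n) : ℕ) = M.1 i := by
      rw [cand_jump hi0]; exact he
    rw [← h1]
    exact Finset.le_sup (f := fun j => ((cand M j : Fin n) : ℕ)) (Finset.mem_Iic.2 hle)

lemma cand_avoids (M : SubDiag n) :
    ¬ ∃ a b c : Fin n, a < b ∧ b < c ∧
      candPerm M c < candPerm M b ∧ candPerm M b < candPerm M a := by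
  rintro ⟨a, b, c, hab, hbc, h1, h2⟩
  replace h1 : ((cand M c : Fin n) : ℕ) < ((cand M b : Fin n) : ℕ) := h1
  replace h2 : ((cand M b : Fin n) : ℕ) < ((cand M a : Fin n) : ℕ) := h2
  have hb : ¬ IsJump M b := by
    rintro (h0 | hlt')
    · have : (a : ℕ) < b := hab; omega
    · have hcb : ((cand M b : Fin n) : ℕ) = M.1 b := by
        rw [cand_jump (Or.inr hlt')]; rfl
      have h3 : ((cand M a : Fin n) : ℕ) ≤ M.1 (fpred b) :=
        le_trans (cand_le a) (M.2.1 (le_fpred hab))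
      omega
  have hc : ¬ IsJump M c := by
    rintro (h0 | hlt')
    · have : (b : ℕ) < c := hbc; omega
    · have hcc : ((cand M c : Fin n) : ℕ) = M.1 c := by
        rw [cand_jump (Or.inr hlt')]; rfl
      have h3 : ((cand M b : Fin n) : ℕ) ≤ M.1 (fpred c) :=
        le_trans (cand_le b) (M.2.1 (le_fpred hbc))
      omega
  exact absurd h1 (not_lt.2 (le_of_lt (cand_strict_on_K hb hc hbc)))

/-- the running maximum of a permutation, as an element of `SubDiag n` -/
def fmap (σ : Equiv.Perm (Fin n)) : SubDiag n := by
  refine ⟨fun i => (Iic i).sup (fun j => ((σ j : Fin n) : ℕ)), ?_, ?_⟩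
  · intro a b hab
    exact Finset.sup_mono (Finset.Iic_subset_Iic.2 hab)
  · intro i
    constructor
    · by_contra hcon
      push_neg at hcon
      -- all values on `Iic i` are `< i`, pigeonhole
      have hall : ∀ j ∈ Iic i, σ j < i := by
        intro j hj
        have h1 : ((σ j : Fin n) : ℕ) ≤ (Iic i).sup (fun j => ((σ j : Fin n) : ℕ)) :=
          Finset.le_sup (f := fun j => ((σ j : Fin n) : ℕ)) hj
        have : ((σ j : Fin n) : ℕ) < (i : ℕ) := by omega
        exact this
      have hsub : (Iic i).image σ ⊆ Iio i := by
        intro w hw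
        obtain ⟨j, hj, rfl⟩ := Finset.mem_image.1 hw
        exact Finset.mem_Iio.2 (hall j hj)
      have hcard := Finset.card_le_card hsub
      rw [Finset.card_image_of_injective _ σ.injective, Fin.card_Iic, Fin.card_Iio] at hcard
      omega
    · have hpos : 0 < n := i.pos
      rw [Finset.sup_lt_iff (by simpa using hpos)]
      intro j _
      exact (σ j).isLt

lemma fmap_attain (σ : Equiv.Perm (Fin n)) (i : Fin n) :
    ∃ j, j ≤ i ∧ ((σ j : Fin n) : ℕ) = (fmap σ).1 i := by
  obtain ⟨b, hb, he⟩ := Finset.exists_mem_eq_sup (Iic i) ⟨i, Finset.mem_Iic.2 le_rfl⟩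
    (fun j => ((σ j : Fin n) : ℕ))
  exact ⟨b, Finset.mem_Iic.1 hb, he.symm⟩

lemma fmap_zero (σ : Equiv.Perm (Fin n)) (i : Fin n) (h : (i : ℕ) = 0) :
    (fmap σ).1 i = ((σ i : Fin n) : ℕ) := by
  have : Iic i = {i} := by
    ext j
    simp only [Finset.mem_Iic, Finset.mem_singleton]
    constructor
    · intro hj; exact Fin.ext (by have : (j : ℕ) ≤ (i : ℕ) := hj; omega)
    · rintro rfl; exact le_rfl
  show (Iic i).sup (fun j => ((σ j : Fin n) : ℕ)) = _
  rw [this, Finset.sup_singleton]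

lemma fmap_split (σ : Equiv.Perm (Fin n)) (i : Fin n) (h : (i : ℕ) ≠ 0) :
    (fmap σ).1 i = max ((σ i : Fin n) : ℕ) ((fmap σ).1 (fpred i)) := by
  have hins : Iic i = insert i (Iic (fpred i)) := by
    ext j
    simp only [Finset.mem_Iic, Finset.mem_insert]
    constructor
    · intro hj
      have hj' : (j : ℕ) ≤ (i : ℕ) := hj
      by_cases hji : (j : ℕ) = (i : ℕ)
      · exact Or.inl (Fin.ext hji)
      · exact Or.inr (show (j : ℕ) ≤ (fpred i : ℕ) by simp [fpred]; omega)
    · rintro (rfl | hj)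
      · exact le_rfl
      · have hj' : (j : ℕ) ≤ (fpred i : ℕ) := hj
        exact show (j : ℕ) ≤ (i : ℕ) by simp [fpred] at hj'; omega
  show (Iic i).sup (fun j => ((σ j : Fin n) : ℕ)) = _
  rw [hins, Finset.sup_insert]
  rfl

lemma fmap_le (σ : Equiv.Perm (Fin n)) (i : Fin n) : ((σ i : Fin n) : ℕ) ≤ (fmap σ).1 i :=
  Finset.le_sup (f := fun j => ((σ j : Fin n) : ℕ)) (Finset.mem_Iic.2 le_rfl)

/-- at a jump of the running maximum, the permutation attains the maximum -/
lemma sigma_jump (σ : Equiv.Perm (Fin n)) (i : Fin n) (h : IsJump (fmap σ) i) :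
    ((σ i : Fin n) : ℕ) = (fmap σ).1 i := by
  rcases h with h0 | hlt
  · exact (fmap_zero σ i h0).symm
  · by_cases h0 : (i : ℕ) = 0
    · exact (fmap_zero σ i h0).symm
    · have := fmap_split σ i h0
      omega

/-- at a non-jump, the value is strictly below the running maximum -/
lemma sigma_nonjump_lt (σ : Equiv.Perm (Fin n)) (hσ : Function.Injective σ) (i : Fin n)
    (h : ¬ IsJump (fmap σ) i) : ((σ i : Fin n) : ℕ) < (fmap σ).1 i := by
  unfold IsJump at h
  push_neg at h
  obtain ⟨h0, hle⟩ := h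
  have heq : (fmap σ).1 (fpred i) = (fmap σ).1 i :=
    le_antisymm ((fmap σ).2.1 (fpred_le i)) hle
  have h1 := fmap_le σ i
  rcases lt_or_eq_of_le h1 with h | h
  · exact h
  · exfalso
    obtain ⟨j, hj, he⟩ := fmap_attain σ (fpred i)
    have hji : j < i := lt_of_le_of_lt hj (show fpred i < i by
      simp only [fpred, Fin.lt_def]; omega)
    have : σ j = σ i := Fin.ext (by rw [he, heq, ← h])
    have : j = i := hσ this
    omega

lemma sigma_mem_VV (σ : Equiv.Perm (Fin n)) (hσ : Function.Injective σ) (i : Fin n)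
    (h : ¬ IsJump (fmap σ) i) : σ i ∈ VV (fmap σ) := by
  rw [mem_VV]
  intro j hj
  obtain ⟨i0, hi0, hle0, he0⟩ := lastJump (fmap σ) j
  have h1 : σ i0 = σ i := by
    apply Fin.ext
    rw [sigma_jump σ i0 hi0, he0]
    exact congrArg Fin.val hj
  have h2 : i0 = i := hσ h1
  rw [h2] at hi0
  exact h hi0

lemma sigma_strict_on_K (σ : Equiv.Perm (Fin n))
    (hσ : ¬ ∃ a b c : Fin n, a < b ∧ b < c ∧ σ c < σ b ∧ σ b < σ a)
    {i i' : Fin n} (hi : ¬ IsJump (fmap σ) i) (hlt : i < i') : σ i < σ i' := by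
  rcases lt_trichotomy (σ i) (σ i') with h | h | h
  · exact h
  · exact absurd (σ.injective (Fin.ext (congrArg Fin.val h))) (ne_of_lt hlt)
  · exfalso
    obtain ⟨j0, hj0, he0⟩ := fmap_attain σ (fpred i)
    have h0 : (i : ℕ) ≠ 0 := fun hc => hi (Or.inl hc)
    have hji : j0 < i := lt_of_le_of_lt hj0 (show fpred i < i by
      simp only [fpred, Fin.lt_def]; omega)
    have heq : (fmap σ).1 (fpred i) = (fmap σ).1 i := by
      unfold IsJump at hi
      push_neg at hi
      exact le_antisymm ((fmap σ).2.1 (fpred_le i)) hi.2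
    have hlt2 : ((σ i : Fin n) : ℕ) < ((σ j0 : Fin n) : ℕ) := by
      have := sigma_nonjump_lt σ σ.injective i hi
      omega
    exact hσ ⟨j0, i, i', hji, hlt, h, hlt2⟩

lemma sigma_eq_cand (σ : Equiv.Perm (Fin n))
    (hσ : ¬ ∃ a b c : Fin n, a < b ∧ b < c ∧ σ c < σ b ∧ σ b < σ a) (i : Fin n) :
    σ i = cand (fmap σ) i := by
  set M := fmap σ with hM
  by_cases h : IsJump M i
  · rw [cand_jump h]
    exact Fin.ext (sigma_jump σ i h)
  · rw [cand_nonjump h]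
    -- σ ∘ eK is the unique order embedding onto VV
    have hemb : (fun y => σ (eK M y)) = ⇑((VV M).orderEmbOfFin (card_VV M)) := by
      apply Finset.orderEmbOfFin_unique
      · intro y
        have hy : eK M y ∈ KK M := Finset.orderEmbOfFin_mem _ _ _
        exact sigma_mem_VV σ σ.injective _ (mem_KK.1 hy)
      · intro y y' hyy
        have h1 : eK M y < eK M y' := (eK M).strictMono hyy
        have hy : eK M y ∈ KK M := Finset.orderEmbOfFin_mem _ _ _
        exact sigma_strict_on_K σ hσ (mem_KK.1 hy) h1
    have hiK : i = eK M ((isoK M).symm ⟨i, mem_KK.2 h⟩) := by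
      rw [eK_isoK, OrderIso.apply_symm_apply]
    calc σ i = σ (eK M ((isoK M).symm ⟨i, mem_KK.2 h⟩)) := by rw [← hiK]
      _ = eV M ((isoK M).symm ⟨i, mem_KK.2 h⟩) := by rw [congrFun hemb]; rfl

lemma fmap_candPerm (M : SubDiag n) : fmap (candPerm M) = M := by
  apply Subtype.ext
  funext i
  exact cand_runmax M i

lemma card_avoiders (n : ℕ) :
    Nat.card {σ : Equiv.Perm (Fin n) //
      ¬ ∃ a b c : Fin n, a < b ∧ b < c ∧ σ c < σ b ∧ σ b < σ a} = Nat.card (SubDiag n) := by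
  apply Nat.card_eq_of_bijective (fun σ => fmap σ.1)
  constructor
  · rintro ⟨σ, hσ⟩ ⟨τ, hτ⟩ h
    simp only at h
    apply Subtype.ext
    apply Equiv.ext
    intro i
    rw [sigma_eq_cand σ hσ i, sigma_eq_cand τ hτ i, h]
  · intro M
    exact ⟨⟨candPerm M, cand_avoids M⟩, fmap_candPerm M⟩

end StepA

/-- The number of `3 2 1`-avoiding permutations of `{1,…,ℓ}` is the Catalan number
`C_ℓ = (1/(ℓ+1))·binom(2ℓ,ℓ)`. -/
theorem stmt_4 (ℓ : ℕ) :
    Nat.card {σ : Equiv.Perm (Fin ℓ) // Avoids321 σ} = catalan ℓ ∧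
    catalan ℓ = (Nat.choose (2 * ℓ) ℓ) / (ℓ + 1) := by
  constructor
  · have h1 : Nat.card {σ : Equiv.Perm (Fin ℓ) // Avoids321 σ} = Nat.card (SubDiag ℓ) :=
      StepA.card_avoiders ℓ
    rw [h1, subdiag_card]
  · rw [catalan_eq_centralBinom_div]
    rfl
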